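/- Let q = 2^{2^n} with n ≥ 2 and let F = F_q. The image of the iterate f^m of f(u) = u² + u over F, where m = 2^n − 4 = Σ_{i=0}^{n-3} 2^{2+i}, is exactly the subfield F_{2^4} of F_q. -/

import Mathlib

theorem range_iterate_eq_subfield {F : Type*} [Field F] [Fintype F] (n : ℕ)
    (hn : 2 ≤ n) (hq : Fintype.card F = 2 ^ 2 ^ n) :
    Set.range ((fun u : F => u ^ 2 + u)^[2 ^ n - 4]) = {x : F | x ^ 16 = x} := by
  classical
  set f : F → F := fun u => u ^ 2 + u with hfdef
  -- the field has characteristic 2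
  have hchar : CharP F 2 := by
    obtain ⟨k, hp, hcard⟩ := FiniteField.card F (ringChar F)
    have hdvd : ringChar F ∣ 2 ^ 2 ^ n := by
      rw [← hq, hcard]
      exact dvd_pow_self _ (by exact_mod_cast k.ne_zero)
    have h2 : ringChar F = 2 :=
      (Nat.prime_dvd_prime_iff_eq hp Nat.prime_two).mp (hp.dvd_of_dvd_pow hdvd)
    exact h2 ▸ ringChar.charP F
  haveI := hchar
  haveI : Fact (Nat.Prime 2) := ⟨Nat.prime_two⟩
  -- key iteration formula : f^[2^k] x = x ^ (2 ^ 2 ^ k) + x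
  have hiter : ∀ (k : ℕ) (x : F), f^[2 ^ k] x = x ^ (2 ^ 2 ^ k : ℕ) + x := by
    intro k
    induction k with
    | zero => intro x; simp [hfdef]
    | succ k ih =>
      intro x
      have h2k : (2 : ℕ) ^ (k + 1) = 2 ^ k + 2 ^ k := by ring
      rw [h2k, Function.iterate_add_apply, ih, ih, add_pow_char_pow, ← pow_mul]
      have hexp : (2 : ℕ) ^ 2 ^ k * 2 ^ 2 ^ k = 2 ^ 2 ^ (k + 1) := by
        rw [← pow_add]; congr 1; omega
      rw [hexp]
      linear_combination CharTwo.add_self_eq_zero ((x : F) ^ (2 ^ 2 ^ k : ℕ))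
  have h4le : (4 : ℕ) ≤ 2 ^ n := by
    calc (4 : ℕ) = 2 ^ 2 := by norm_num
    _ ≤ 2 ^ n := Nat.pow_le_pow_right (by norm_num) hn
  -- f^[2^n] is identically zero
  have hzero : ∀ u : F, f^[2 ^ n] u = 0 := by
    intro u
    rw [hiter n u, ← hq, FiniteField.pow_card, CharTwo.add_self_eq_zero]
  -- every element of the range satisfies x^16 = x
  have hmem : ∀ u : F, (f^[2 ^ n - 4] u) ^ 16 = f^[2 ^ n - 4] u := by
    intro u
    have h4 : f^[4] (f^[2 ^ n - 4] u) = 0 := by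
      rw [← Function.iterate_add_apply, show 4 + (2 ^ n - 4) = 2 ^ n by omega]
      exact hzero u
    have hx := hiter 2 (f^[2 ^ n - 4] u)
    rw [show (2 : ℕ) ^ 2 = 4 from rfl] at hx
    rw [hx] at h4
    norm_num at h4
    linear_combination h4 - (f^[2 ^ n - 4] u) * (CharTwo.two_eq_zero (R := F))
  -- counting: the image of f^[k] has at least card F / 2^k elements
  have hcount : ∀ k : ℕ, Fintype.card F ≤ 2 ^ k * (Finset.univ.image f^[k]).card := by
    intro k
    induction k with
    | zero => simp [Finset.image_id]
    | succ k ih =>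
      have himg : (Finset.univ.image f^[k + 1]) = (Finset.univ.image f^[k]).image f := by
        rw [Function.iterate_succ', Finset.image_image]
      have hstep : (Finset.univ.image f^[k]).card ≤
          2 * ((Finset.univ.image f^[k]).image f).card := by
        apply Finset.card_le_mul_card_image
        intro b hb
        obtain ⟨a, ha, hab⟩ := Finset.mem_image.mp hb
        have hsub : {x ∈ Finset.univ.image f^[k] | f x = b} ⊆ {a, a + 1} := by
          intro x hx
          obtain ⟨hx1, hx2⟩ := Finset.mem_filter.mp hx
          have hfx : x ^ 2 + x = a ^ 2 + a := by
            have h1 : f x = b := hx2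
            have h2 : f a = b := hab
            simpa [hfdef] using h1.trans h2.symm
          have hmul : (x + a) * (x + a + 1) = 0 := by
            linear_combination hfx + (a ^ 2 + a * x + a) * (CharTwo.two_eq_zero (R := F))
          rcases mul_eq_zero.mp hmul with h | h
          · have : x = a := by linear_combination h - a * (CharTwo.two_eq_zero (R := F))
            simp [this]
          · have : x = a + 1 := by linear_combination h - (a + 1) * (CharTwo.two_eq_zero (R := F))
            simp [this]
        calc {x ∈ Finset.univ.image f^[k] | f x = b}.card ≤ ({a, a + 1} : Finset F).card :=
              Finset.card_le_card hsub
          _ ≤ 2 := Finset.card_insert_le _ _ |>.trans (by simp)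
      calc Fintype.card F ≤ 2 ^ k * (Finset.univ.image f^[k]).card := ih
        _ ≤ 2 ^ k * (2 * ((Finset.univ.image f^[k]).image f).card) :=
            Nat.mul_le_mul_left _ hstep
        _ = 2 ^ (k + 1) * (Finset.univ.image f^[k + 1]).card := by rw [himg]; ring
  -- so the image of f^[2^n-4] has at least 16 elements
  have h16 : 16 ≤ (Finset.univ.image f^[2 ^ n - 4]).card := by
    have hc := hcount (2 ^ n - 4)
    rw [hq] at hc
    have hpow : (2 : ℕ) ^ 2 ^ n = 2 ^ (2 ^ n - 4) * 16 := by
      rw [show (16 : ℕ) = 2 ^ 4 by norm_num, ← pow_add]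
      congr 1; omega
    rw [hpow] at hc
    exact Nat.le_of_mul_le_mul_left hc (Nat.pow_pos (by norm_num))
  -- the solution set of x^16 = x has at most 16 elements
  have hroots : ({x ∈ (Finset.univ : Finset F) | x ^ 16 = x}).card ≤ 16 := by
    have hne : (Polynomial.X ^ 16 - Polynomial.X : Polynomial F) ≠ 0 := fun h => by
      simpa [Polynomial.coeff_X_pow, Polynomial.coeff_X] using congrArg (fun p => Polynomial.coeff p 16) h
    have hsub : {x ∈ (Finset.univ : Finset F) | x ^ 16 = x} ⊆
        (Polynomial.X ^ 16 - Polynomial.X : Polynomial F).roots.toFinset := by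
      intro x hx
      rw [Multiset.mem_toFinset]
      refine Polynomial.mem_roots'.mpr ⟨hne, ?_⟩
      have := (Finset.mem_filter.mp hx).2
      simp [Polynomial.IsRoot, sub_eq_zero, this]
    have hdeg : (Polynomial.X ^ 16 - Polynomial.X : Polynomial F).natDegree = 16 := by
      compute_degree!
    calc ({x ∈ (Finset.univ : Finset F) | x ^ 16 = x}).card
        ≤ (Polynomial.X ^ 16 - Polynomial.X : Polynomial F).roots.toFinset.card :=
          Finset.card_le_card hsub
      _ ≤ Multiset.card (Polynomial.X ^ 16 - Polynomial.X : Polynomial F).roots :=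
          Multiset.toFinset_card_le _
      _ ≤ 16 := by
          have := Polynomial.card_roots' (Polynomial.X ^ 16 - Polynomial.X : Polynomial F)
          omega
  -- conclude equality of finsets
  have hsubset : (Finset.univ.image f^[2 ^ n - 4]) ⊆
      {x ∈ (Finset.univ : Finset F) | x ^ 16 = x} := by
    intro x hx
    obtain ⟨u, _, hu⟩ := Finset.mem_image.mp hx
    exact Finset.mem_filter.mpr ⟨Finset.mem_univ x, hu ▸ hmem u⟩
  have heq : (Finset.univ.image f^[2 ^ n - 4]) =
      {x ∈ (Finset.univ : Finset F) | x ^ 16 = x} :=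
    Finset.eq_of_subset_of_card_le hsubset (hroots.trans h16)
  ext x
  simp only [Set.mem_setOf_eq, Set.mem_range]
  constructor
  · rintro ⟨u, rfl⟩; exact hmem u
  · intro hx
    have : x ∈ Finset.univ.image f^[2 ^ n - 4] := by
      rw [heq]; exact Finset.mem_filter.mpr ⟨Finset.mem_univ x, hx⟩
    obtain ⟨u, _, hu⟩ := Finset.mem_image.mp this
    exact ⟨u, hu⟩
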